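/- Let (λ₁, λ₂) be an interlacing pair of type D_n weights with λ₁(h_{n-1}) + λ₁(h_n) = λ₂(h_{n-1}) + λ₂(h_n) = 0. Let p = max{ i : λ₁(i) + λ₂(i) = 1 } and assume p exists, p ≤ n-2, and (λ₁+λ₂)(h_{p-1}) = 0. Then β_{p-1,p} ∈ R(λ₁,λ₂), β_{i,j} ∉ R(λ₁,λ₂) whenever j > p, and for any β_{i,j} ∈ R(λ₁,λ₂) with i ≤ p-2, j ≤ p one has β_{i,j} − β_{p-1,p} = α_{i,p-2} + α_{j,p-1} (interpreting α_{a,b} = 0 when a > b). -/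
import Mathlib


/-- The value `λ(h_a) + ⋯ + λ(h_b)` of a weight on a sum of consecutive simple coroots. -/
def hIcc (lam : ℕ → ℤ) (a b : ℕ) : ℤ := ∑ s ∈ Finset.Icc a b, lam s

/-- Pairing of a weight with the coroot of the type-A root `α_{i,j}` in type `D_n`
(`α_{i,n} = α_i + ⋯ + α_{n-2} + α_n`); zero if `i > j`. -/
def hA (n : ℕ) (lam : ℕ → ℤ) (i j : ℕ) : ℤ :=
  if j < i then 0 else if j = n then hIcc lam i (n - 2) + lam n else hIcc lam i j

/-- Pairing of a weight with the coroot of `β_{i,j}`: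
`λ(h_{β_{i,j}}) = λ(h_{i,n-1}) + λ(h_{j,n-2}) + λ(h_n)`. -/
def hBeta (n : ℕ) (lam : ℕ → ℤ) (i j : ℕ) : ℤ :=
  hIcc lam i (n - 1) + hIcc lam j (n - 2) + lam n

/-- An interlacing pair of type `D_n` weights (weights are `ℕ → ℤ`, with values on
indices `1,…,n`; nonnegativity and the conditions (a)–(c) are built in). -/
def Interlacing (n : ℕ) (l1 l2 : ℕ → ℤ) : Prop :=
  (∀ i, 1 ≤ i → i ≤ n → 0 ≤ l1 i ∧ 0 ≤ l2 i ∧ l1 i + l2 i ≤ 1) ∧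
  (0 < l1 (n - 1) + l1 n → l2 (n - 1) + l2 n = 0) ∧
  (0 < l2 (n - 1) + l2 n → l1 (n - 1) + l1 n = 0) ∧
  (∀ i j, 1 ≤ i → i < j → j ≤ n → ¬(i = n - 1 ∧ j = n) →
    (l1 i = 1 → l1 j = 1 → ∃ s, i < s ∧ s < j ∧ l2 s = 1) ∧
    (l2 i = 1 → l2 j = 1 → ∃ s, i < s ∧ s < j ∧ l1 s = 1))

/-- Coefficient function (on simple roots) of `α_{a,b} = α_a + ⋯ + α_b`; zero if `a > b`. -/
def alphaCoeff (a b k : ℕ) : ℤ := if a ≤ k ∧ k ≤ b then 1 else 0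

/-- Coefficient function of `β_{i,j} = α_i + ⋯ + α_{j-1} + 2(α_j + ⋯ + α_{n-2}) + α_{n-1} + α_n`. -/
def betaCoeff (n i j k : ℕ) : ℤ :=
  (if i ≤ k ∧ k ≤ j - 1 then 1 else 0) + 2 * (if j ≤ k ∧ k ≤ n - 2 then 1 else 0) +
    (if k = n - 1 ∨ k = n then 1 else 0)

private lemma sum_Icc_bot (f : ℕ → ℤ) {a b : ℕ} (h : a ≤ b) :
    ∑ s ∈ Finset.Icc a b, f s = f a + ∑ s ∈ Finset.Icc (a+1) b, f s := by
  rw [← Finset.add_sum_erase _ f (Finset.mem_Icc.mpr ⟨le_refl a, h⟩), Finset.Icc_erase_left,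
    Finset.Icc_add_one_left_eq_Ioc]

private lemma hIcc_bot (f : ℕ → ℤ) {a b : ℕ} (h : a ≤ b) :
    hIcc f a b = f a + hIcc f (a+1) b := sum_Icc_bot f h

private lemma hIcc_empty (f : ℕ → ℤ) {a b : ℕ} (h : b < a) : hIcc f a b = 0 := by
  simp [hIcc, Finset.Icc_eq_empty_of_lt h]

private lemma hIcc_trunc (lam : ℕ → ℤ) (a : ℕ) {b c : ℕ} (hcb : c ≤ b)
    (hz : ∀ q, c < q → q ≤ b → lam q = 0) : hIcc lam a b = hIcc lam a c := by
  unfold hIcc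
  refine (Finset.sum_subset (Finset.Icc_subset_Icc_right hcb) ?_).symm
  intro x hx hx'
  simp only [Finset.mem_Icc] at hx hx'
  exact hz x (by omega) hx.2

/-- Key suffix-sum lemma: any suffix sum of `l1 - l2` up to `p` is in `{-1,0,1}`,
with a witness for the leading nonzero entry. -/
private lemma keyLemma (n : ℕ) (hn : 4 ≤ n) (l1 l2 : ℕ → ℤ) (h : Interlacing n l1 l2)
    (p : ℕ) (hpn : p ≤ n - 2) :
    ∀ m a, p + 1 - a ≤ m → 1 ≤ a →
      (hIcc l1 a p - hIcc l2 a p = 0) ∨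
      (hIcc l1 a p - hIcc l2 a p = 1 ∧
        ∃ t, a ≤ t ∧ t ≤ p ∧ l1 t = 1 ∧ ∀ s, a ≤ s → s < t → l1 s = 0 ∧ l2 s = 0) ∨
      (hIcc l1 a p - hIcc l2 a p = -1 ∧
        ∃ t, a ≤ t ∧ t ≤ p ∧ l2 t = 1 ∧ ∀ s, a ≤ s → s < t → l1 s = 0 ∧ l2 s = 0) := by
  intro m
  induction m with
  | zero =>
    intro a ham _
    left
    rw [hIcc_empty _ (by omega), hIcc_empty _ (by omega)]
    ring
  | succ m ih =>
    intro a ham ha1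
    by_cases hap : p < a
    · left
      rw [hIcc_empty _ hap, hIcc_empty _ hap]; ring
    · push_neg at hap
      have hbase := h.1 a ha1 (by omega)
      have hs1 : hIcc l1 a p = l1 a + hIcc l1 (a+1) p := hIcc_bot _ hap
      have hs2 : hIcc l2 a p = l2 a + hIcc l2 (a+1) p := hIcc_bot _ hap
      have ihs := ih (a+1) (by omega) (by omega)
      have trich : (l1 a = 0 ∧ l2 a = 0) ∨ (l1 a = 1 ∧ l2 a = 0) ∨ (l1 a = 0 ∧ l2 a = 1) := by
        omega
      rcases trich with ⟨e1, e2⟩ | ⟨e1, e2⟩ | ⟨e1, e2⟩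
      · -- (0,0) : suffix sum unchanged
        rcases ihs with h0 | ⟨h1', t, ht1, ht2, ht3, ht4⟩ | ⟨h1', t, ht1, ht2, ht3, ht4⟩
        · left; rw [hs1, hs2, e1, e2]; linarith
        · right; left
          refine ⟨by rw [hs1, hs2, e1, e2]; linarith, t, by omega, ht2, ht3, ?_⟩
          intro s hs hst
          rcases Nat.eq_or_lt_of_le hs with rfl | h'
          · exact ⟨e1, e2⟩
          · exact ht4 s (by omega) hst
        · right; right
          refine ⟨by rw [hs1, hs2, e1, e2]; linarith, t, by omega, ht2, ht3, ?_⟩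
          intro s hs hst
          rcases Nat.eq_or_lt_of_le hs with rfl | h'
          · exact ⟨e1, e2⟩
          · exact ht4 s (by omega) hst
      · -- (1,0)
        rcases ihs with h0 | ⟨h1', t, ht1, ht2, ht3, ht4⟩ | ⟨h1', t, ht1, ht2, ht3, ht4⟩
        · right; left
          refine ⟨by rw [hs1, hs2, e1, e2]; linarith, a, le_refl a, hap, e1, ?_⟩
          intro s hs hst; exfalso; omega
        · -- contradiction via interlacing
          exfalso
          obtain ⟨s, hs1', hs2', hs3'⟩ :=
            (h.2.2.2 a t ha1 (by omega) (by omega) (by omega)).1 e1 ht3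
          have := ht4 s (by omega) hs2'
          omega
        · left; rw [hs1, hs2, e1, e2]; linarith
      · -- (0,1)
        rcases ihs with h0 | ⟨h1', t, ht1, ht2, ht3, ht4⟩ | ⟨h1', t, ht1, ht2, ht3, ht4⟩
        · right; right
          refine ⟨by rw [hs1, hs2, e1, e2]; linarith, a, le_refl a, hap, e2, ?_⟩
          intro s hs hst; exfalso; omega
        · left; rw [hs1, hs2, e1, e2]; linarith
        · exfalso
          obtain ⟨s, hs1', hs2', hs3'⟩ :=
            (h.2.2.2 a t ha1 (by omega) (by omega) (by omega)).2 e2 ht3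
          have := ht4 s (by omega) hs2'
          omega
/-- Case where both weights vanish on `{n-1,n}`, `p = max{i : (λ₁+λ₂)(h_i) = 1} ≤ n-2` and
`(λ₁+λ₂)(h_{p-1}) = 0`: then `β_{p-1,p} ∈ R(λ₁,λ₂)`, no `β_{i,j}` with `j > p` lies in
`R(λ₁,λ₂)`, and for `β_{i,j} ∈ R(λ₁,λ₂)` with `i ≤ p-2`, `j ≤ p` one has
`β_{i,j} − β_{p-1,p} = α_{i,p-2} + α_{j,p-1}`. -/
theorem stmt7 (n : ℕ) (hn : 4 ≤ n) (l1 l2 : ℕ → ℤ) (h : Interlacing n l1 l2)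
    (h1 : l1 (n - 1) + l1 n = 0) (h2 : l2 (n - 1) + l2 n = 0)
    (p : ℕ) (hp2 : 2 ≤ p) (hpn : p ≤ n - 2)
    (hpval : l1 p + l2 p = 1)
    (hpmax : ∀ q, p < q → q ≤ n → l1 q + l2 q = 0)
    (hprev : l1 (p - 1) + l2 (p - 1) = 0) :
    |hBeta n l1 (p - 1) p - hBeta n l2 (p - 1) p| = 2 ∧
      (∀ i j, 1 ≤ i → i < j → j ≤ n - 1 → p < j →
        |hBeta n l1 i j - hBeta n l2 i j| ≠ 2) ∧
      ∀ i j, 1 ≤ i → i < j → j ≤ n - 1 → i ≤ p - 2 → j ≤ p →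
        |hBeta n l1 i j - hBeta n l2 i j| = 2 →
        ∀ k, betaCoeff n i j k - betaCoeff n (p - 1) p k =
          alphaCoeff i (p - 2) k + alphaCoeff j (p - 1) k := by
  -- entries above p vanish
  have hz : ∀ q, p < q → q ≤ n → l1 q = 0 ∧ l2 q = 0 := by
    intro q hq1 hq2
    have := h.1 q (by omega) hq2
    have := hpmax q hq1 hq2
    omega
  have hz1 : ∀ q, p < q → q ≤ n → l1 q = 0 := fun q a b => (hz q a b).1
  have hz2 : ∀ q, p < q → q ≤ n → l2 q = 0 := fun q a b => (hz q a b).2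
  -- hBeta rewritten as sums up to p
  have hBeq : ∀ (lam : ℕ → ℤ), (∀ q, p < q → q ≤ n → lam q = 0) →
      ∀ i j, hBeta n lam i j = hIcc lam i p + hIcc lam j p := by
    intro lam hzl i j
    have e1 : hIcc lam i (n - 1) = hIcc lam i p :=
      hIcc_trunc lam i (by omega) (fun q hq1 hq2 => hzl q hq1 (by omega))
    have e2 : hIcc lam j (n - 2) = hIcc lam j p :=
      hIcc_trunc lam j (by omega) (fun q hq1 hq2 => hzl q hq1 (by omega))
    have e3 : lam n = 0 := hzl n (by omega) le_rfl
    rw [hBeta, e1, e2, e3]; ring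
  have key := keyLemma n hn l1 l2 h p hpn (p + 1)
  -- difference of suffix sums
  have hprev0 : l1 (p - 1) = 0 ∧ l2 (p - 1) = 0 := by
    have := h.1 (p - 1) (by omega) (by omega)
    omega
  have hDp : hIcc l1 p p - hIcc l2 p p = l1 p - l2 p := by
    simp [hIcc]
  have hDp1 : hIcc l1 (p - 1) p - hIcc l2 (p - 1) p = l1 p - l2 p := by
    have hpp : p - 1 + 1 = p := by omega
    rw [hIcc_bot l1 (by omega : p - 1 ≤ p), hIcc_bot l2 (by omega : p - 1 ≤ p), hpp,
      hprev0.1, hprev0.2]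
    simpa using hDp
  refine ⟨?_, ?_, ?_⟩
  · -- β_{p-1,p} ∈ R
    rw [hBeq l1 hz1, hBeq l2 hz2]
    have hv : l1 p - l2 p = 1 ∨ l1 p - l2 p = -1 := by
      have := h.1 p (by omega) (by omega)
      omega
    have : hIcc l1 (p - 1) p + hIcc l1 p p - (hIcc l2 (p - 1) p + hIcc l2 p p)
        = 2 * (l1 p - l2 p) := by linarith [hDp, hDp1]
    rw [this]
    rcases hv with hv | hv <;> rw [hv] <;> norm_num
  · -- no β_{i,j} with j > p
    intro i j hi hij hj hpj
    rw [hBeq l1 hz1, hBeq l2 hz2]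
    have hDj : hIcc l1 j p = 0 ∧ hIcc l2 j p = 0 :=
      ⟨hIcc_empty _ (by omega), hIcc_empty _ (by omega)⟩
    have hred : hIcc l1 i p + hIcc l1 j p - (hIcc l2 i p + hIcc l2 j p)
        = hIcc l1 i p - hIcc l2 i p := by rw [hDj.1, hDj.2]; ring
    rw [hred]
    rcases key i (by omega) hi with h0 | ⟨h0, -⟩ | ⟨h0, -⟩ <;> rw [h0] <;> norm_num
  · -- coefficient identity
    intro i j hi hij hj hip hjp _ k
    simp only [betaCoeff, alphaCoeff]
    split_ifs <;> omega
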